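/- Let θ be a real skew-symmetric n × n matrix and let F be a group acting on ℤ^n by automorphisms such that each element of F acts by a matrix W ∈ GL_n(ℤ) with Wᵀ θ W = θ. Then the map ω'_θ on G = ℤ^n ⋊ F defined by ω'_θ((x,s),(y,t)) = exp(2πi ⟨-θx, s·y⟩) is a 2-cocycle on G. -/
import Mathlib


open Matrix

-- key algebraic identity over ℝ
lemma symp_dot {n : ℕ} (θ S : Matrix (Fin n) (Fin n) ℝ) (hθ : θᵀ = -θ)
    (hS : Sᵀ * θ * S = θ) (y w : Fin n → ℝ) :
    (θ *ᵥ (S *ᵥ y)) ⬝ᵥ (S *ᵥ w) = (θ *ᵥ y) ⬝ᵥ w := by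
  have h1 : θ *ᵥ (S *ᵥ y) = y ᵥ* (Sᵀ * θᵀ) := by
    rw [Matrix.mulVec_mulVec, ← Matrix.vecMul_transpose, Matrix.transpose_mul]
  have h2 : θ *ᵥ y = y ᵥ* θᵀ := by rw [← Matrix.vecMul_transpose]
  rw [h1, h2, Matrix.dotProduct_mulVec, Matrix.vecMul_vecMul]
  congr 1
  rw [hθ, Matrix.mul_neg, Matrix.neg_mul, Matrix.vecMul_neg, hS, Matrix.vecMul_neg]

lemma key2 {n : ℕ} (θ M N : Matrix (Fin n) (Fin n) ℝ) (hθ : θᵀ = -θ)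
    (hM : Mᵀ * θ * M = θ) (x y z : Fin n → ℝ) :
    (-(θ *ᵥ x)) ⬝ᵥ (M *ᵥ y) + (-(θ *ᵥ (x + M *ᵥ y))) ⬝ᵥ ((M * N) *ᵥ z)
    = (-(θ *ᵥ x)) ⬝ᵥ (M *ᵥ (y + N *ᵥ z)) + (-(θ *ᵥ y)) ⬝ᵥ (N *ᵥ z) := by
  simp only [Matrix.mulVec_add, ← Matrix.mulVec_mulVec, neg_add_rev, add_dotProduct,
    neg_dotProduct, dotProduct_add]
  linarith [symp_dot θ M hθ hM y (N *ᵥ z)]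


/-- For `θ` real skew-symmetric and a group `F` acting on `ℤ^n` through integer matrices
`φ s` satisfying `(φ s)ᵀ θ (φ s) = θ`, the map
`ω'_θ((x,s),(y,t)) = exp(2πi ⟨-θx, s·y⟩)` is a 2-cocycle on the semidirect product
`ℤ^n ⋊ F`, whose multiplication is `(x,s)(y,t) = (x + s·y, st)`. -/
theorem stmt1 (n : ℕ) (θ : Matrix (Fin n) (Fin n) ℝ) (hθ : θᵀ = -θ)
    (F : Type*) [Group F] (φ : F →* Matrix (Fin n) (Fin n) ℤ)
    (hsymp : ∀ s : F,
      ((φ s).map ((↑) : ℤ → ℝ))ᵀ * θ * ((φ s).map ((↑) : ℤ → ℝ)) = θ)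
    (ω : ((Fin n → ℤ) × F) → ((Fin n → ℤ) × F) → ℂ)
    (hω : ∀ g h : (Fin n → ℤ) × F, ω g h =
      Complex.exp ((2 * Real.pi *
        (∑ i, (-(θ.mulVec fun j => (g.1 j : ℝ))) i * (((φ g.2).mulVec h.1) i : ℝ)) : ℝ)
        * Complex.I))
    (mul : ((Fin n → ℤ) × F) → ((Fin n → ℤ) × F) → ((Fin n → ℤ) × F))
    (hmul : ∀ g h, mul g h = (g.1 + (φ g.2).mulVec h.1, g.2 * h.2)) :
    (∀ g h k, ω g h * ω (mul g h) k = ω g (mul h k) * ω h k) ∧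
    (∀ g, ω g (0, 1) = 1) ∧ (∀ g, ω (0, 1) g = 1) := by
  set c : (Fin n → ℤ) → (Fin n → ℝ) := fun v j => (v j : ℝ) with hc
  have hcast : ∀ (s : F) (v : Fin n → ℤ),
      c ((φ s) *ᵥ v) = ((φ s).map ((↑) : ℤ → ℝ)) *ᵥ (c v) := by
    intro s v
    funext i
    exact RingHom.map_mulVec (Int.castRingHom ℝ) (φ s) v i
  have hE : ∀ g h : (Fin n → ℤ) × F, ω g h =
      Complex.exp ((2 * Real.pi *
        ((-(θ *ᵥ c g.1)) ⬝ᵥ (((φ g.2).map ((↑) : ℤ → ℝ)) *ᵥ c h.1)) : ℝ) * Complex.I) := by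
    intro g h
    rw [hω g h]
    congr 2
    rw [← hcast]
    rfl
  refine ⟨?_, ?_, ?_⟩
  · intro g h k
    rw [hE, hE, hE, hE, hmul, hmul, ← Complex.exp_add, ← Complex.exp_add]
    congr 1
    rw [← add_mul, ← add_mul, ← Complex.ofReal_add, ← Complex.ofReal_add]
    congr 2
    have hkey := key2 θ ((φ g.2).map ((↑) : ℤ → ℝ)) ((φ h.2).map ((↑) : ℤ → ℝ))
      hθ (hsymp g.2) (c g.1) (c h.1) (c k.1)
    have h1 : c (g.1 + (φ g.2) *ᵥ h.1) = c g.1 + ((φ g.2).map ((↑) : ℤ → ℝ)) *ᵥ c h.1 := by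
      funext i
      simp only [hc, Pi.add_apply, Int.cast_add]
      rw [← hcast]
    have h2 : c (h.1 + (φ h.2) *ᵥ k.1) = c h.1 + ((φ h.2).map ((↑) : ℤ → ℝ)) *ᵥ c k.1 := by
      funext i
      simp only [hc, Pi.add_apply, Int.cast_add]
      rw [← hcast]
    have h3 : (φ (g.2 * h.2)).map ((↑) : ℤ → ℝ)
        = ((φ g.2).map ((↑) : ℤ → ℝ)) * ((φ h.2).map ((↑) : ℤ → ℝ)) := by
      rw [_root_.map_mul φ]
      exact Matrix.map_mul (f := Int.castRingHom ℝ)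
    simp only [h1, h2, h3]
    linear_combination (2 * Real.pi) * hkey
  · intro g
    simp [hω]
  · intro g
    have h0 : (θ *ᵥ fun _ => (0:ℝ)) = 0 := Matrix.mulVec_zero θ
    simp [hω, h0]
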